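/- Let X₁,…,X_n ∈ ℂ and let Y := median(Re X₁,…,Re X_n) + i·median(Im X₁,…,Im X_n), where the median of n reals is their ⌈n/2⌉-th largest element. Then for every a ∈ ℂ, |Y − a| ≤ 2·median(|X₁ − a|,…,|X_n − a|). -/

import Mathlib

/- STATEMENT 13: Let X₁,…,X_n ∈ ℂ and Y := median(Re X₁,…,Re X_n) + i·median(Im X₁,…,Im X_n),
   where the median of m reals is their ⌈m/2⌉-th largest element. Then for every a ∈ ℂ,
   |Y − a| ≤ 2·median(|X₁ − a|,…,|X_n − a|). -/

/-- the k-th largest element (1-indexed) of the values u₀,…,u_{m−1} -/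
noncomputable def kthLargest {m : ℕ} (u : Fin m → ℝ) (k : ℕ) : ℝ :=
  ((List.ofFn u).insertionSort (· ≤ ·)).getD (m - k) 0

/-- the median of m reals: their ⌈m/2⌉-th largest element -/
noncomputable def medianOf {m : ℕ} (u : Fin m → ℝ) : ℝ :=
  kthLargest u ⌈(m : ℝ) / 2⌉₊

set_option linter.unnecessarySeqFocus false in
lemma aux_countP_eq_sum {α : Type*} (q : α → Bool) : ∀ l : List α,
    l.countP q = (l.map fun i => if q i then 1 else 0).sum
  | [] => rfl
  | a :: l => by
    simp [List.countP_cons, aux_countP_eq_sum q l]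
    by_cases h : q a <;> simp [h] <;> omega

lemma aux_countP_ofFn {n : ℕ} (u : Fin n → ℝ) (p : ℝ → Bool) :
    (List.ofFn u).countP p = (Finset.univ.filter (fun i => p (u i))).card := by
  classical
  rw [List.ofFn_eq_map, List.countP_map, Finset.card_filter, Fin.univ_def]
  simp [Finset.sum, aux_countP_eq_sum, Function.comp]

lemma aux_sorted_mono (s : List ℝ) (hsort : s.Pairwise (· ≤ ·)) (i j : ℕ) (hij : i ≤ j)
    (hj : j < s.length) : s[i]'(lt_of_le_of_lt hij hj) ≤ s[j] := by
  have := hsort.rel_get_of_le (a := ⟨i, lt_of_le_of_lt hij hj⟩) (b := ⟨j, hj⟩) (by exact hij)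
  simpa using this

lemma aux_sorted_facts {n : ℕ} (u : Fin n → ℝ) :
    ((List.ofFn u).insertionSort (· ≤ ·)).length = n ∧
    ((List.ofFn u).insertionSort (· ≤ ·)).Pairwise (· ≤ ·) :=
  ⟨by rw [List.length_insertionSort, List.length_ofFn], List.pairwise_insertionSort _ _⟩

lemma aux_kthLargest_eq {n k : ℕ} (hk1 : 1 ≤ k) (hkn : k ≤ n) (u : Fin n → ℝ) :
    kthLargest u k =
      ((List.ofFn u).insertionSort (· ≤ ·))[n - k]'(by
        rw [(aux_sorted_facts u).1]; omega) := by
  have hlt : n - k < ((List.ofFn u).insertionSort (· ≤ ·)).length := by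
    rw [(aux_sorted_facts u).1]; omega
  rw [kthLargest, List.getD_eq_getElem?_getD, List.getElem?_eq_getElem hlt]; rfl

/-- If at least `n - k + 1` values are `≤ x` then the `k`-th largest is `≤ x`. -/
lemma aux_kthLargest_le {n k : ℕ} (hk1 : 1 ≤ k) (hkn : k ≤ n) (u : Fin n → ℝ) (x : ℝ)
    (S : Finset (Fin n)) (hcard : n - k + 1 ≤ S.card) (hS : ∀ i ∈ S, u i ≤ x) :
    kthLargest u k ≤ x := by
  classical
  set s := (List.ofFn u).insertionSort (· ≤ ·) with hs
  obtain ⟨hlen, hsort⟩ := aux_sorted_facts u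
  rw [← hs] at hlen hsort
  by_contra h
  push_neg at h
  rw [aux_kthLargest_eq hk1 hkn] at h
  have h' : x < s[n - k]'(by omega) := h
  have hcnt : s.countP (fun y => decide (y ≤ x)) ≤ n - k := by
    have hdrop : (s.drop (n - k)).countP (fun y => decide (y ≤ x)) = 0 := by
      rw [List.countP_eq_zero]
      intro y hy
      obtain ⟨i, hi, hig⟩ := List.mem_iff_getElem.mp hy
      have hlen' : (s.drop (n - k)).length = s.length - (n - k) := List.length_drop
      have hy2 : y = s[(n - k) + i]'(by omega) := by rw [← hig, List.getElem_drop]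
      have hle : s[n - k]'(by omega) ≤ y := by
        rw [hy2]; exact aux_sorted_mono s hsort _ _ (Nat.le_add_right _ _) (by omega)
      simp only [decide_eq_true_eq]
      exact fun hyx => absurd (le_trans hle hyx) (not_le.mpr h')
    calc s.countP (fun y => decide (y ≤ x))
        = (s.take (n - k)).countP _ + (s.drop (n - k)).countP _ := by
          conv_lhs => rw [← List.take_append_drop (n - k) s]
          exact List.countP_append
      _ ≤ (s.take (n - k)).length + 0 := by
          rw [hdrop]; exact Nat.add_le_add List.countP_le_length le_rfl
      _ ≤ n - k := by rw [List.length_take]; omega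
  have hcnt2 : n - k + 1 ≤ s.countP (fun y => decide (y ≤ x)) := by
    rw [hs, (List.perm_insertionSort _ _).countP_eq, aux_countP_ofFn]
    refine le_trans hcard (Finset.card_le_card fun i hi => ?_)
    simp only [Finset.mem_filter, Finset.mem_univ, true_and, decide_eq_true_eq]
    exact hS i hi
  omega

/-- If at least `k` values are `≥ x` then the `k`-th largest is `≥ x`. -/
lemma aux_le_kthLargest {n k : ℕ} (hk1 : 1 ≤ k) (hkn : k ≤ n) (u : Fin n → ℝ) (x : ℝ)
    (S : Finset (Fin n)) (hcard : k ≤ S.card) (hS : ∀ i ∈ S, x ≤ u i) :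
    x ≤ kthLargest u k := by
  classical
  set s := (List.ofFn u).insertionSort (· ≤ ·) with hs
  obtain ⟨hlen, hsort⟩ := aux_sorted_facts u
  rw [← hs] at hlen hsort
  by_contra h
  push_neg at h
  rw [aux_kthLargest_eq hk1 hkn] at h
  have h' : s[n - k]'(by omega) < x := h
  have hcnt : s.countP (fun y => decide (x ≤ y)) ≤ k - 1 := by
    have htake : (s.take (n - k + 1)).countP (fun y => decide (x ≤ y)) = 0 := by
      rw [List.countP_eq_zero]
      intro y hy
      obtain ⟨i, hi, hig⟩ := List.mem_iff_getElem.mp hy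
      have hlen' : (s.take (n - k + 1)).length = min (n - k + 1) s.length :=
        List.length_take
      have hy2 : y = s[i]'(by omega) := by rw [← hig, List.getElem_take]
      have hle : y ≤ s[n - k]'(by omega) := by
        rw [hy2]; exact aux_sorted_mono s hsort _ _ (by omega) (by omega)
      simp only [decide_eq_true_eq]
      exact fun hxy => absurd (le_trans hxy hle) (not_le.mpr h')
    calc s.countP (fun y => decide (x ≤ y))
        = (s.take (n - k + 1)).countP _ + (s.drop (n - k + 1)).countP _ := by
          conv_lhs => rw [← List.take_append_drop (n - k + 1) s]
          exact List.countP_append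
      _ ≤ 0 + (s.drop (n - k + 1)).length := by
          rw [htake]; exact Nat.add_le_add le_rfl List.countP_le_length
      _ ≤ k - 1 := by rw [List.length_drop]; omega
  have hcnt2 : k ≤ s.countP (fun y => decide (x ≤ y)) := by
    rw [hs, (List.perm_insertionSort _ _).countP_eq, aux_countP_ofFn]
    refine le_trans hcard (Finset.card_le_card fun i hi => ?_)
    simp only [Finset.mem_filter, Finset.mem_univ, true_and, decide_eq_true_eq]
    exact hS i hi
  omega

/-- At least `n - k + 1` values are `≤` the `k`-th largest. -/
lemma aux_card_le_kthLargest {n k : ℕ} (hk1 : 1 ≤ k) (hkn : k ≤ n) (u : Fin n → ℝ) :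
    n - k + 1 ≤ (Finset.univ.filter (fun i => u i ≤ kthLargest u k)).card := by
  classical
  set s := (List.ofFn u).insertionSort (· ≤ ·) with hs
  obtain ⟨hlen, hsort⟩ := aux_sorted_facts u
  rw [← hs] at hlen hsort
  set M := kthLargest u k with hM
  have hMg : M = s[n - k]'(by omega) := aux_kthLargest_eq hk1 hkn u
  have hcnt : n - k + 1 ≤ s.countP (fun y => decide (y ≤ M)) := by
    have htake : (s.take (n - k + 1)).countP (fun y => decide (y ≤ M)) =
        (s.take (n - k + 1)).length := by
      rw [List.countP_eq_length]
      intro y hy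
      obtain ⟨i, hi, hig⟩ := List.mem_iff_getElem.mp hy
      have hlen' : (s.take (n - k + 1)).length = min (n - k + 1) s.length :=
        List.length_take
      have hy2 : y = s[i]'(by omega) := by rw [← hig, List.getElem_take]
      have hle : y ≤ s[n - k]'(by omega) := by
        rw [hy2]; exact aux_sorted_mono s hsort _ _ (by omega) (by omega)
      simp only [decide_eq_true_eq]
      rw [hMg]; exact hle
    calc n - k + 1 = (s.take (n - k + 1)).length := by rw [List.length_take]; omega
      _ = (s.take (n - k + 1)).countP (fun y => decide (y ≤ M)) := htake.symm
      _ ≤ s.countP (fun y => decide (y ≤ M)) := by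
          conv_rhs => rw [← List.take_append_drop (n - k + 1) s]
          rw [List.countP_append]; omega
  have := hcnt
  rw [hs, (List.perm_insertionSort _ _).countP_eq, aux_countP_ofFn] at this
  refine le_trans this (le_of_eq (congrArg Finset.card ?_))
  ext i
  simp

theorem stmt13 {n : ℕ} (hn : 1 ≤ n) (X : Fin n → ℂ) (a : ℂ) :
    ‖(((medianOf (fun i => (X i).re) : ℝ) : ℂ) +
            Complex.I * ((medianOf (fun i => (X i).im) : ℝ) : ℂ) - a)‖
      ≤ 2 * medianOf (fun i => ‖X i - a‖) := by
  classical
  set k : ℕ := ⌈(n : ℝ) / 2⌉₊ with hk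
  have hk1 : 1 ≤ k := Nat.ceil_pos.mpr (by positivity)
  have hkn : k ≤ n := Nat.ceil_le.mpr (by
    rw [div_le_iff₀ (by norm_num)]
    have : (1 : ℝ) ≤ n := by exact_mod_cast hn
    nlinarith)
  have hk2 : k ≤ n - k + 1 := by
    have h2 : k ≤ (n + 1) / 2 := Nat.ceil_le.mpr (by
      rw [div_le_iff₀ (by norm_num)]
      have : n ≤ ((n + 1) / 2) * 2 := by omega
      exact_mod_cast this)
    omega
  set v : Fin n → ℝ := fun i => ‖X i - a‖ with hv
  set M : ℝ := medianOf v with hM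
  have hMk : M = kthLargest v k := rfl
  set T : Finset (Fin n) := Finset.univ.filter (fun i => v i ≤ M) with hT
  have hTcard : n - k + 1 ≤ T.card := aux_card_le_kthLargest hk1 hkn v
  have hTcard' : k ≤ T.card := le_trans hk2 hTcard
  have hre : ∀ i ∈ T, |(X i).re - a.re| ≤ M := fun i hi => by
    have h1 : |(X i - a).re| ≤ ‖X i - a‖ := Complex.abs_re_le_norm _
    have h2 : v i ≤ M := (Finset.mem_filter.mp hi).2
    simpa [Complex.sub_re] using le_trans h1 h2
  have him : ∀ i ∈ T, |(X i).im - a.im| ≤ M := fun i hi => by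
    have h1 : |(X i - a).im| ≤ ‖X i - a‖ := Complex.abs_im_le_norm _
    have h2 : v i ≤ M := (Finset.mem_filter.mp hi).2
    simpa [Complex.sub_im] using le_trans h1 h2
  have hre_ub : medianOf (fun i => (X i).re) ≤ a.re + M :=
    aux_kthLargest_le hk1 hkn _ _ T hTcard (fun i hi => by
      have := abs_le.mp (hre i hi); linarith [this.2])
  have hre_lb : a.re - M ≤ medianOf (fun i => (X i).re) :=
    aux_le_kthLargest hk1 hkn _ _ T hTcard' (fun i hi => by
      have := abs_le.mp (hre i hi); linarith [this.1])
  have him_ub : medianOf (fun i => (X i).im) ≤ a.im + M :=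
    aux_kthLargest_le hk1 hkn _ _ T hTcard (fun i hi => by
      have := abs_le.mp (him i hi); linarith [this.2])
  have him_lb : a.im - M ≤ medianOf (fun i => (X i).im) :=
    aux_le_kthLargest hk1 hkn _ _ T hTcard' (fun i hi => by
      have := abs_le.mp (him i hi); linarith [this.1])
  set z : ℂ := ((medianOf (fun i => (X i).re) : ℝ) : ℂ) +
      Complex.I * ((medianOf (fun i => (X i).im) : ℝ) : ℂ) - a with hz
  have hzre : z.re = medianOf (fun i => (X i).re) - a.re := by simp [hz]
  have hzim : z.im = medianOf (fun i => (X i).im) - a.im := by simp [hz]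
  have h1 : ‖z‖ ≤ |z.re| + |z.im| := Complex.norm_le_abs_re_add_abs_im z
  have h2 : |z.re| ≤ M := by rw [hzre, abs_le]; constructor <;> linarith
  have h3 : |z.im| ≤ M := by rw [hzim, abs_le]; constructor <;> linarith
  calc ‖z‖ ≤ |z.re| + |z.im| := h1
    _ ≤ M + M := add_le_add h2 h3
    _ = 2 * M := by ring
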